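/- The closed-form Age of Incorrect Information distribution under the randomized stationary policy is a probability distribution: P(0) + ∑_{i≥1} P(i) = 1, the series being convergent. -/

import Mathlib

/-- The closed-form Age of Incorrect Information distribution under the randomized
stationary policy is a probability distribution. -/
theorem aoii_is_prob (p q a : ℝ)
    (hp : 0 < p) (hp1 : p < 1) (hq : 0 < q) (hq1 : q < 1)
    (ha : 0 < a) (ha1 : a ≤ 1)
    (Φ : ℝ → ℝ) (hΦ : ∀ x, Φ x = x + (1 - x) * a)
    (D : ℝ) (hD : D = p + q + (1 - p - q) * a)
    (P : ℕ → ℝ)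
    (hP0 : P 0 = (p ^ 2 + q ^ 2 + (p + q - p ^ 2 - q ^ 2) * a) / ((p + q) * D))
    (hP : ∀ i : ℕ, 1 ≤ i →
      P i = p * q * (1 - a) ^ i *
        ((1 - q) ^ (i - 1) * Φ q + (1 - p) ^ (i - 1) * Φ p) / ((p + q) * D)) :
    Summable (fun i : ℕ => P (i + 1)) ∧
    P 0 + ∑' i : ℕ, P (i + 1) = 1 := by
  set r1 : ℝ := (1 - a) * (1 - q) with hr1
  set r2 : ℝ := (1 - a) * (1 - p) with hr2
  set c1 : ℝ := p * q * (1 - a) * Φ q / ((p + q) * D) with hc1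
  set c2 : ℝ := p * q * (1 - a) * Φ p / ((p + q) * D) with hc2
  have hfun : ∀ i : ℕ, P (i + 1) = c1 * r1 ^ i + c2 * r2 ^ i := by
    intro i
    rw [hP (i + 1) (Nat.le_add_left 1 i)]
    simp only [Nat.add_sub_cancel, pow_succ, hc1, hc2, hr1, hr2, mul_pow]
    ring
  have h1a : (0:ℝ) ≤ 1 - a := by linarith
  have hr1nn : (0:ℝ) ≤ r1 := mul_nonneg h1a (by linarith)
  have hr2nn : (0:ℝ) ≤ r2 := mul_nonneg h1a (by linarith)
  have hr1lt : r1 < 1 := by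
    have : r1 ≤ 1 - q := by
      rw [hr1]
      nlinarith
    linarith
  have hr2lt : r2 < 1 := by
    have : r2 ≤ 1 - p := by
      rw [hr2]
      nlinarith
    linarith
  have hs1 : Summable (fun i : ℕ => r1 ^ i) :=
    summable_geometric_of_lt_one hr1nn hr1lt
  have hs2 : Summable (fun i : ℕ => r2 ^ i) :=
    summable_geometric_of_lt_one hr2nn hr2lt
  have hsum : Summable (fun i : ℕ => P (i + 1)) := by
    have := (hs1.mul_left c1).add (hs2.mul_left c2)
    exact this.congr fun i => (hfun i).symm
  refine ⟨hsum, ?_⟩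
  have hts : ∑' i : ℕ, P (i + 1) = c1 * (1 - r1)⁻¹ + c2 * (1 - r2)⁻¹ := by
    calc ∑' i : ℕ, P (i + 1)
        = ∑' i : ℕ, (c1 * r1 ^ i + c2 * r2 ^ i) := by
          exact tsum_congr hfun
      _ = (∑' i : ℕ, c1 * r1 ^ i) + ∑' i : ℕ, c2 * r2 ^ i :=
          Summable.tsum_add (hs1.mul_left c1) (hs2.mul_left c2)
      _ = c1 * (1 - r1)⁻¹ + c2 * (1 - r2)⁻¹ := by
          rw [tsum_mul_left, tsum_mul_left,
            tsum_geometric_of_lt_one hr1nn hr1lt,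
            tsum_geometric_of_lt_one hr2nn hr2lt]
  rw [hts, hP0]
  have hpq : p + q ≠ 0 := by positivity
  have hDpos : 0 < D := by
    rw [hD]
    nlinarith
  have hD0 : D ≠ 0 := ne_of_gt hDpos
  have h1r1 : 1 - r1 = Φ q := by rw [hr1, hΦ]; ring
  have h1r2 : 1 - r2 = Φ p := by rw [hr2, hΦ]; ring
  have hΦq : Φ q ≠ 0 := by rw [hΦ]; nlinarith
  have hΦp : Φ p ≠ 0 := by rw [hΦ]; nlinarith
  rw [hc1, hc2, h1r1, h1r2]
  field_simp
  rw [hD]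
  ring
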